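/- If a group G contains a finite-index subgroup H that is balanced, then G itself is balanced. -/
import Mathlib


def IsBalanced (G : Type*) [Group G] : Prop :=
  ∀ g h : G, ¬ IsOfFinOrder h → ∀ k l : ℤ, k ≠ 0 → l ≠ 0 →
    g * h ^ k * g⁻¹ = h ^ l → |k| = |l|

theorem balanced_of_finiteIndex_balanced_subgroup {G : Type*} [Group G]
    (H : Subgroup G) (hfi : H.FiniteIndex) (hH : IsBalanced H) : IsBalanced G := by
  intro g h hord k l hk hl heq
  -- iterate the relation
  have key : ∀ r : ℕ, g ^ r * h ^ (k ^ r) * (g ^ r)⁻¹ = h ^ (l ^ r) := by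
    intro r
    induction r with
    | zero => simp
    | succ r ih =>
      have e1 : h ^ (k ^ (r + 1)) = (h ^ k) ^ (k ^ r) := by
        rw [← zpow_mul, ← pow_succ']
      calc g ^ (r + 1) * h ^ (k ^ (r + 1)) * (g ^ (r + 1))⁻¹
          = g ^ r * (g * (h ^ k) ^ (k ^ r) * g⁻¹) * (g ^ r)⁻¹ := by
            rw [e1, pow_succ, mul_inv_rev]; group
        _ = g ^ r * (g * h ^ k * g⁻¹) ^ (k ^ r) * (g ^ r)⁻¹ := by
            rw [conj_zpow]
        _ = g ^ r * (h ^ (k ^ r)) ^ l * (g ^ r)⁻¹ := by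
            rw [heq, ← zpow_mul, ← zpow_mul, mul_comm]
        _ = (g ^ r * h ^ (k ^ r) * (g ^ r)⁻¹) ^ l := by
            rw [conj_zpow]
        _ = h ^ (l ^ (r + 1)) := by
            rw [ih, ← zpow_mul, ← pow_succ]
  -- find powers landing in H
  obtain ⟨m, hm0, -, hmH⟩ := Subgroup.exists_pow_mem_of_index_ne_zero hfi.index_ne_zero h
  obtain ⟨r, hr0, -, hrH⟩ := Subgroup.exists_pow_mem_of_index_ne_zero hfi.index_ne_zero g
  set a : H := ⟨h ^ m, hmH⟩
  set b : H := ⟨g ^ r, hrH⟩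
  have ha : ¬ IsOfFinOrder a := by
    intro hfa
    have : IsOfFinOrder (h ^ m) := H.subtype.isOfFinOrder hfa
    exact hord (this.of_pow hm0.ne')
  have hkr : (k ^ r : ℤ) ≠ 0 := pow_ne_zero _ hk
  have hlr : (l ^ r : ℤ) ≠ 0 := pow_ne_zero _ hl
  have hconj : b * a ^ (k ^ r : ℤ) * b⁻¹ = a ^ (l ^ r : ℤ) := by
    apply Subtype.ext
    push_cast
    show g ^ r * (h ^ m) ^ (k ^ r : ℤ) * (g ^ r)⁻¹ = (h ^ m) ^ (l ^ r : ℤ)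
    rw [← zpow_natCast h m, ← zpow_mul, ← zpow_mul, mul_comm (m : ℤ) (k ^ r),
      mul_comm (m : ℤ) (l ^ r), zpow_mul, zpow_mul, ← conj_zpow, key r]
  have habs := hH b a ha _ _ hkr hlr hconj
  rw [abs_pow, abs_pow] at habs
  have hn : k.natAbs ^ r = l.natAbs ^ r := by
    have := congrArg Int.natAbs habs
    simpa [Int.natAbs_pow, Int.natAbs_abs] using this
  have : k.natAbs = l.natAbs := Nat.pow_left_injective hr0.ne' hn
  rw [Int.abs_eq_natAbs, Int.abs_eq_natAbs, this]
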